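/- Let i : [0,∞) → [0,1] and x₂, x₃ : [0,∞) → ℝ with x₃ differentiable, x₃'(t) = r_M(x₂(t),x₃(t))·i(t) − d_M·x₃(t) for all t ≥ 0, and x₂(t) ≥ 0, x₃(t) ≥ 0 for all t ≥ 0. Then for all t ≥ 0, x₃(t) ≤ (c_{1,M}/d_M)·(1 − e^{−d_M t}) + x₃(0)·e^{−d_M t}. -/

import Mathlib

open Set Real

/-- upper bound on `x₃` by the solution of the comparison ODE
`z' = c₁M - dM z`. -/
theorem stmt_5
    (c₁M dM c₂M c₃M : ℝ) (hc₁M : 0 < c₁M) (hdM : 0 < dM)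
    (hc₂M : 0 ≤ c₂M) (hc₃M : 0 ≤ c₃M)
    (i : ℝ → ℝ) (hi : ∀ t, i t ∈ Icc (0:ℝ) 1)
    (x₂ x₃ : ℝ → ℝ)
    (hx₃ : ∀ t ≥ (0:ℝ), HasDerivAt x₃
      (c₁M / (1 + c₂M * x₂ t + c₃M * x₃ t) * i t - dM * x₃ t) t)
    (hb : ∀ t ≥ (0:ℝ), 0 ≤ x₂ t ∧ 0 ≤ x₃ t) :
    ∀ t ≥ (0:ℝ), x₃ t ≤ c₁M / dM * (1 - Real.exp (-dM * t))
      + x₃ 0 * Real.exp (-dM * t) := by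
  set g : ℝ → ℝ := fun t => (x₃ t - c₁M / dM) * Real.exp (dM * t) with hg
  have hgd : ∀ t ≥ (0:ℝ), HasDerivAt g
      ((c₁M / (1 + c₂M * x₂ t + c₃M * x₃ t) * i t - c₁M) * Real.exp (dM * t)) t := by
    intro t ht
    have h1 : HasDerivAt (fun t => x₃ t - c₁M / dM)
        (c₁M / (1 + c₂M * x₂ t + c₃M * x₃ t) * i t - dM * x₃ t) t :=
      (hx₃ t ht).sub_const _
    have h2 : HasDerivAt (fun t => Real.exp (dM * t)) (dM * Real.exp (dM * t)) t := by
      have := (Real.hasDerivAt_exp (dM * t)).comp t ((hasDerivAt_id t).const_mul dM)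
      simpa [mul_comm, Function.comp_def] using this
    have : HasDerivAt (fun t => (x₃ t - c₁M / dM) * Real.exp (dM * t)) _ t := h1.mul h2
    convert this using 1
    field_simp
    ring
  have hder : ∀ t ≥ (0:ℝ),
      (c₁M / (1 + c₂M * x₂ t + c₃M * x₃ t) * i t - c₁M) * Real.exp (dM * t) ≤ 0 := by
    intro t ht
    have hden : (1:ℝ) ≤ 1 + c₂M * x₂ t + c₃M * x₃ t := by
      obtain ⟨h2, h3⟩ := hb t ht
      nlinarith
    have hr : c₁M / (1 + c₂M * x₂ t + c₃M * x₃ t) ≤ c₁M := by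
      rw [div_le_iff₀ (by linarith)]
      nlinarith
    have hr0 : 0 ≤ c₁M / (1 + c₂M * x₂ t + c₃M * x₃ t) :=
      div_nonneg hc₁M.le (by linarith)
    obtain ⟨hi0, hi1⟩ := hi t
    have hri : c₁M / (1 + c₂M * x₂ t + c₃M * x₃ t) * i t ≤ c₁M := by
      calc c₁M / (1 + c₂M * x₂ t + c₃M * x₃ t) * i t
          ≤ c₁M / (1 + c₂M * x₂ t + c₃M * x₃ t) * 1 := by
            exact mul_le_mul_of_nonneg_left hi1 hr0
        _ ≤ c₁M := by simpa using hr
    exact mul_nonpos_of_nonpos_of_nonneg (by linarith) (Real.exp_pos _).le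
  have hanti : AntitoneOn g (Ici (0:ℝ)) := by
    apply antitoneOn_of_deriv_nonpos (convex_Ici 0)
    · intro t ht
      exact ((hgd t ht).differentiableAt).continuousAt.continuousWithinAt
    · intro t ht
      rw [interior_Ici] at ht
      exact ((hgd t ht.le).differentiableAt).differentiableWithinAt
    · intro t ht
      rw [interior_Ici] at ht
      rw [(hgd t ht.le).deriv]
      exact hder t ht.le
  intro t ht
  have hle : g t ≤ g 0 := hanti self_mem_Ici ht ht
  have he : Real.exp (dM * t) * Real.exp (-dM * t) = 1 := by
    rw [← Real.exp_add]; simp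
  have hg0 : g 0 = x₃ 0 - c₁M / dM := by simp [hg]
  rw [hg0] at hle
  have hexp : 0 < Real.exp (-dM * t) := Real.exp_pos _
  have := mul_le_mul_of_nonneg_right hle hexp.le
  simp only [hg] at this
  rw [mul_assoc, he, mul_one] at this
  have hcd : c₁M / dM * (1 - Real.exp (-dM * t)) + x₃ 0 * Real.exp (-dM * t)
      = c₁M / dM + (x₃ 0 - c₁M / dM) * Real.exp (-dM * t) := by ring
  rw [hcd]
  linarith
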